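/- arXiv:0710.2531 — 3 statements merged into one kernel-verified Lean document; each statement's English description precedes it below -/
import Mathlib

section
/- Let δ(t) be a symmetric Laurent polynomial over ℤ, meaning δ(t⁻¹) = δ(t). If (t - 1) divides δ (as a Laurent polynomial), then (t - 1)² divides δ. -/
open LaurentPolynomial

/-- Evaluation of a Laurent polynomial at `1`, as the augmentation algebra hom. -/
noncomputable def epsAux : ℤ[T;T⁻¹] →ₐ[ℤ] ℤ := AddMonoidAlgebra.lift ℤ ℤ ℤ 1

lemma epsAux_T (n : ℤ) : epsAux (T n) = 1 := by
  rw [T, epsAux, AddMonoidAlgebra.lift_single]; simp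

lemma epsAux_C (a : ℤ) : epsAux (LaurentPolynomial.C a) = a := by
  rw [LaurentPolynomial.C, epsAux]
  erw [AddMonoidAlgebra.lift_single]
  simp

lemma epsAux_invert (f : ℤ[T;T⁻¹]) : epsAux (LaurentPolynomial.invert f) = epsAux f := by
  have h : epsAux.comp (LaurentPolynomial.invert (R := ℤ)).toAlgHom = epsAux := by
    apply AddMonoidAlgebra.algHom_ext
    intro x
    show epsAux (LaurentPolynomial.invert (T x)) = epsAux (T x)
    rw [invert_T, epsAux_T, epsAux_T]
    exact Subsingleton.elim _ _
  exact DFunLike.congr_fun h f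

lemma epsAux_toLaurent (p : Polynomial ℤ) :
    epsAux (Polynomial.toLaurent p) = p.eval 1 := by
  induction p using Polynomial.induction_on' with
  | add p q hp hq => simp [hp, hq]
  | monomial n a =>
      rw [Polynomial.toLaurent_C_mul_T, map_mul, epsAux_T, epsAux_C,
        Polynomial.eval_monomial, one_pow, mul_one]

lemma T_sub_one_ne_zero : (T 1 - 1 : ℤ[T;T⁻¹]) ≠ 0 := by
  have : (Polynomial.toLaurent (Polynomial.X - 1 : Polynomial ℤ)) = (T 1 - 1 : ℤ[T;T⁻¹]) := by
    rw [map_sub, Polynomial.toLaurent_X, Polynomial.toLaurent_one]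
  rw [← this, Polynomial.toLaurent_ne_zero]
  intro h
  have := congrArg (Polynomial.eval 2) h
  simp at this

/-- If `δ ∈ ℤ[t,t⁻¹]` is symmetric (`δ(t⁻¹) = δ(t)`) and `t - 1`
divides `δ`, then `(t - 1)²` divides `δ` in the Laurent polynomial ring. -/
theorem stmt4 (δ : ℤ[T;T⁻¹]) (hsym : LaurentPolynomial.invert δ = δ)
    (hdvd : (T 1 - 1 : ℤ[T;T⁻¹]) ∣ δ) :
    (T 1 - 1 : ℤ[T;T⁻¹]) ^ 2 ∣ δ := by
  obtain ⟨q, hq⟩ := hdvd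
  have hT : (T 1 : ℤ[T;T⁻¹]) * T (-1) = 1 := by
    rw [← T_add]; norm_num
  have h2 : (T (-1) - 1 : ℤ[T;T⁻¹]) * LaurentPolynomial.invert q = (T 1 - 1) * q := by
    have : LaurentPolynomial.invert δ = (T (-1) - 1) * LaurentPolynomial.invert q := by
      rw [hq, map_mul, map_sub, invert_T, map_one]
    rw [← this, hsym, hq]
  have h1 : (T 1 - 1 : ℤ[T;T⁻¹]) * q
      = (T 1 - 1) * (-T (-1) * LaurentPolynomial.invert q) := by
    linear_combination -h2 + (LaurentPolynomial.invert q) * hT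
  have hc : q = -T (-1) * LaurentPolynomial.invert q :=
    mul_left_cancel₀ T_sub_one_ne_zero h1
  have hεq : epsAux q = 0 := by
    have := congrArg epsAux hc
    rw [map_mul, map_neg, epsAux_T, epsAux_invert] at this
    omega
  obtain ⟨n, p, hp⟩ := q.exists_T_pow
  have hev : p.eval 1 = 0 := by
    rw [← epsAux_toLaurent, hp, map_mul, epsAux_T, hεq, zero_mul]
  have hdvdp : (Polynomial.X - 1 : Polynomial ℤ) ∣ p := by
    have := (Polynomial.dvd_iff_isRoot (p := p) (a := (1 : ℤ))).mpr hev
    simpa using this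
  have hdvdq : (T 1 - 1 : ℤ[T;T⁻¹]) ∣ q := by
    obtain ⟨r, hr⟩ := hdvdp
    have : q = (T 1 - 1) * (Polynomial.toLaurent r * T (-↑n : ℤ)) := by
      have h3 : Polynomial.toLaurent p = (T 1 - 1) * Polynomial.toLaurent r := by
        rw [hr, map_mul, map_sub, Polynomial.toLaurent_X, Polynomial.toLaurent_one]
      have h4 : q * T (n : ℤ) * T (-↑n : ℤ) = q := by
        rw [mul_assoc, ← T_add]; norm_num
      calc q = q * T (n : ℤ) * T (-↑n : ℤ) := h4.symm
        _ = Polynomial.toLaurent p * T (-↑n : ℤ) := by rw [hp]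
        _ = (T 1 - 1) * (Polynomial.toLaurent r * T (-↑n : ℤ)) := by rw [h3, mul_assoc]
    exact ⟨_, this⟩
  obtain ⟨r, hr⟩ := hdvdq
  exact ⟨r, by rw [hq, hr]; ring⟩
end

section
/- Let p > 0 and let Δ₁, Δ₂ ∈ ℤ[t, t⁻¹] be symmetric Laurent polynomials (Δᵢ(t⁻¹) = Δᵢ(t)) with Δ₁(1) = Δ₂(1) = 1. If (tᵖ - 1) divides Δ₁ - Δ₂, then (t - 1)(tᵖ - 1) divides Δ₁ - Δ₂ in ℤ[t, t⁻¹]. -/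
open LaurentPolynomial

/-- The value of a Laurent polynomial at `t = 1`, i.e. the sum of its coefficients. -/
def evalAtOne (f : ℤ[T;T⁻¹]) : ℤ := f.coeff.sum fun _ c => c

/-- Evaluation at 1 as an algebra hom. -/
noncomputable def evalOneHom : ℤ[T;T⁻¹] →ₐ[ℤ] ℤ := AddMonoidAlgebra.lift ℤ ℤ ℤ 1

lemma evalOneHom_eq (f : ℤ[T;T⁻¹]) : evalOneHom f = evalAtOne f := by
  rw [evalOneHom, AddMonoidAlgebra.lift_apply, evalAtOne]
  simp

lemma evalOneHom_T (n : ℤ) : evalOneHom (T n) = 1 := by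
  rw [evalOneHom, T, AddMonoidAlgebra.lift_single]; simp

lemma evalOneHom_invert (f : ℤ[T;T⁻¹]) : evalOneHom (invert f) = evalOneHom f := by
  rw [evalOneHom, AddMonoidAlgebra.lift_apply, AddMonoidAlgebra.lift_apply]
  rw [show (invert f : ℤ[T;T⁻¹]).coeff = Finsupp.equivMapDomain (AddEquiv.neg ℤ).toEquiv f.coeff by ext; simp [invert]]
  rw [Finsupp.sum_equivMapDomain]; simp

lemma evalOneHom_toLaurent (P : Polynomial ℤ) :
    evalOneHom (P.toLaurent) = P.eval 1 := by
  have : evalOneHom.comp Polynomial.toLaurentAlg = Polynomial.aeval (1 : ℤ) := by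
    apply Polynomial.algHom_ext
    simp [Polynomial.toLaurentAlg, evalOneHom_T]
  have h := congrFun (congrArg DFunLike.coe this) P
  simpa [Polynomial.toLaurentAlg_apply] using h

lemma T_sub_one_ne (p : ℕ) (hp : 0 < p) : (T (p : ℤ) - 1 : ℤ[T;T⁻¹]) ≠ 0 := by
  intro h
  have heq : (T (p : ℤ) : ℤ[T;T⁻¹]) = T 0 := by
    rw [T_zero]; exact sub_eq_zero.mp h
  have hp0 : (p : ℤ) ≠ 0 := by exact_mod_cast hp.ne'
  have : (p : ℤ) = 0 := by
    have := AddMonoidAlgebra.single_left_injective (M := ℤ) (R := ℤ) one_ne_zero heq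
    exact this
  exact hp0 this

lemma dvd_of_evalOne_zero (q : ℤ[T;T⁻¹]) (h : evalOneHom q = 0) :
    (T 1 - 1 : ℤ[T;T⁻¹]) ∣ q := by
  obtain ⟨n, P, hP⟩ := q.exists_T_pow
  have hev : P.eval 1 = 0 := by
    rw [← evalOneHom_toLaurent, hP, map_mul, h, zero_mul]
  have hdvd : (Polynomial.X - Polynomial.C 1 : Polynomial ℤ) ∣ P :=
    (Polynomial.dvd_iff_isRoot).mpr hev
  have := map_dvd (Polynomial.toLaurent (R := ℤ)) hdvd
  rw [hP] at this
  simp only [map_sub, Polynomial.toLaurent_X, Polynomial.toLaurent_C, map_one] at this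
  have hq : q = q * T (n : ℤ) * T (-(n : ℤ)) := by
    rw [mul_assoc, ← T_add, add_neg_cancel, T_zero, mul_one]
  exact hq ▸ Dvd.dvd.mul_right this _

/-- If `Δ₁, Δ₂ ∈ ℤ[t,t⁻¹]` are symmetric with `Δ₁(1) = Δ₂(1) = 1`
and `tᵖ - 1` divides `Δ₁ - Δ₂`, then `(t-1)(tᵖ-1)` divides `Δ₁ - Δ₂`. -/
theorem stmt5 (p : ℕ) (hp : 0 < p) (Δ₁ Δ₂ : ℤ[T;T⁻¹])
    (hsym₁ : LaurentPolynomial.invert Δ₁ = Δ₁)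
    (hsym₂ : LaurentPolynomial.invert Δ₂ = Δ₂)
    (h₁ : evalAtOne Δ₁ = 1) (h₂ : evalAtOne Δ₂ = 1)
    (hdvd : (T (p : ℤ) - 1 : ℤ[T;T⁻¹]) ∣ Δ₁ - Δ₂) :
    (T 1 - 1 : ℤ[T;T⁻¹]) * (T (p : ℤ) - 1) ∣ Δ₁ - Δ₂ := by
  obtain ⟨q, hq⟩ := hdvd
  have hsym : invert (Δ₁ - Δ₂) = Δ₁ - Δ₂ := by rw [map_sub, hsym₁, hsym₂]
  have key : (T (p : ℤ) - 1 : ℤ[T;T⁻¹]) * q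
      = (T (p : ℤ) - 1) * (-(T (-(p : ℤ))) * invert q) := by
    have h1 : invert (Δ₁ - Δ₂) = (T (-(p : ℤ)) - 1) * invert q := by
      rw [hq, map_mul, map_sub, invert_T, map_one]
    have h2 : (T (-(p : ℤ)) - 1 : ℤ[T;T⁻¹])
        = (T (p : ℤ) - 1) * (-(T (-(p : ℤ)))) := by
      rw [mul_neg, sub_mul, one_mul, ← T_add, add_neg_cancel, T_zero]
      ring
    rw [← hq, ← hsym, h1, h2]; ring
  have hcancel : q = -(T (-(p : ℤ))) * invert q :=
    mul_left_cancel₀ (T_sub_one_ne p hp) key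
  have hzero : evalOneHom q = 0 := by
    have := congrArg evalOneHom hcancel
    rw [map_mul, map_neg, evalOneHom_T, evalOneHom_invert] at this
    linarith
  obtain ⟨r, hr⟩ := dvd_of_evalOne_zero q hzero
  exact ⟨r, by rw [hq, hr]; ring⟩
end

section
/- Let p > 0 and let f, g ∈ ℤ[t, t⁻¹]. Suppose f has the property (*): for each residue class i mod p there is exactly one exponent n ≡ i (mod p) at which the coefficient of f is nonzero. If g also has property (*) and f ≡ g (mod (tᵖ - 1)²), then f = g. -/
open LaurentPolynomial

section Aux

open DualNumber AddMonoidAlgebra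

variable (p : ℕ)

/-- Auxiliary monoid hom `ℤ → (DualNumber ℤ)[ZMod p]`, `n ↦ single (n mod p) (1 + n ε)`. -/
noncomputable def stmt8χ : Multiplicative ℤ →* AddMonoidAlgebra (DualNumber ℤ) (ZMod p) where
  toFun n := AddMonoidAlgebra.single ((Multiplicative.toAdd n : ℤ) : ZMod p)
      (1 + ((Multiplicative.toAdd n : ℤ) : DualNumber ℤ) * ε)
  map_one' := by simp [AddMonoidAlgebra.one_def]
  map_mul' x y := by
    rw [AddMonoidAlgebra.single_mul_single]
    have h1 : ((Multiplicative.toAdd (x * y) : ℤ) : ZMod p) =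
        ((Multiplicative.toAdd x : ℤ) : ZMod p) + ((Multiplicative.toAdd y : ℤ) : ZMod p) := by
      push_cast [toAdd_mul]; ring
    have h2 : (1 + ((Multiplicative.toAdd (x * y) : ℤ) : DualNumber ℤ) * ε) =
        (1 + ((Multiplicative.toAdd x : ℤ) : DualNumber ℤ) * ε) *
          (1 + ((Multiplicative.toAdd y : ℤ) : DualNumber ℤ) * ε) := by
      push_cast [toAdd_mul]
      linear_combination (-((Multiplicative.toAdd x : ℤ) : DualNumber ℤ) *
        ((Multiplicative.toAdd y : ℤ) : DualNumber ℤ)) * (DualNumber.eps_mul_eps (R := ℤ))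
    rw [h1, h2]

/-- The key ring hom `ℤ[T;T⁻¹] → (DualNumber ℤ)[ZMod p]`. -/
noncomputable def stmt8Ψ : ℤ[T;T⁻¹] →ₐ[ℤ] AddMonoidAlgebra (DualNumber ℤ) (ZMod p) :=
  AddMonoidAlgebra.lift ℤ _ ℤ (stmt8χ p)

lemma stmt8Ψ_single (n : ℤ) (a : ℤ) :
    stmt8Ψ p (AddMonoidAlgebra.single n a) =
      AddMonoidAlgebra.single ((n : ZMod p)) ((a : DualNumber ℤ) * (1 + (n : DualNumber ℤ) * ε)) := by
  rw [stmt8Ψ, AddMonoidAlgebra.lift_single]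
  simp only [stmt8χ, MonoidHom.coe_mk, OneHom.coe_mk, toAdd_ofAdd]
  rw [AddMonoidAlgebra.smul_single, zsmul_eq_mul]

lemma stmt8Ψ_apply (f : ℤ[T;T⁻¹]) (i : ZMod p) :
    (stmt8Ψ p f).coeff i =
      ∑ n ∈ f.coeff.support, if (n : ZMod p) = i then (f.coeff n : DualNumber ℤ) * (1 + (n : DualNumber ℤ) * ε) else 0 := by
  conv_lhs => rw [← AddMonoidAlgebra.sum_coeff_single f]
  rw [map_finsuppSum, Finsupp.sum, AddMonoidAlgebra.coeff_sum, Finsupp.finset_sum_apply]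
  refine Finset.sum_congr rfl fun n _ => ?_
  rw [stmt8Ψ_single, AddMonoidAlgebra.coeff_single, Finsupp.single_apply]

lemma stmt8Ψ_apply_star {f : ℤ[T;T⁻¹]} (i : ZMod p)
    {n₀ : ℤ} (h₀ : (n₀ : ZMod p) = i ∧ f.coeff n₀ ≠ 0)
    (hu : ∀ m : ℤ, ((m : ZMod p) = i ∧ f.coeff m ≠ 0) → m = n₀) :
    (stmt8Ψ p f).coeff i = (f.coeff n₀ : DualNumber ℤ) * (1 + (n₀ : DualNumber ℤ) * ε) := by
  rw [stmt8Ψ_apply, Finset.sum_eq_single n₀]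
  · rw [if_pos h₀.1]
  · intro b hb hbne
    rw [if_neg]
    intro hbi
    exact hbne (hu b ⟨hbi, Finsupp.mem_support_iff.mp hb⟩)
  · intro hns
    exact absurd (Finsupp.mem_support_iff.mpr h₀.2) hns

lemma stmt8Ψ_T_pow :
    stmt8Ψ p ((T (p : ℤ) - 1 : ℤ[T;T⁻¹]) ^ 2) = 0 := by
  have hT : stmt8Ψ p (T (p : ℤ)) =
      AddMonoidAlgebra.single (0 : ZMod p) (1 + (p : DualNumber ℤ) * ε) := by
    rw [LaurentPolynomial.T, stmt8Ψ_single]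
    push_cast
    simp [ZMod.natCast_self]
  have h1 : (1 : AddMonoidAlgebra (DualNumber ℤ) (ZMod p)) =
      AddMonoidAlgebra.single (0 : ZMod p) 1 := AddMonoidAlgebra.one_def
  rw [map_pow, map_sub, map_one, hT, h1, ← AddMonoidAlgebra.single_sub]
  have h2 : (1 + (p : DualNumber ℤ) * ε - 1) = (p : DualNumber ℤ) * ε := by ring
  rw [h2, sq, AddMonoidAlgebra.single_mul_single]
  have h3 : ((p : DualNumber ℤ) * ε) * ((p : DualNumber ℤ) * ε) = 0 := by
    linear_combination ((p : DualNumber ℤ) * (p : DualNumber ℤ)) * (DualNumber.eps_mul_eps (R := ℤ))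
  rw [h3]
  simp

end Aux


/-- Property (*): the support of the Laurent polynomial `f` contains exactly one
exponent in each residue class mod `p`. -/
def PropertyStar (p : ℕ) (f : ℤ[T;T⁻¹]) : Prop :=
  ∀ i : ZMod p, ∃! n : ℤ, (n : ZMod p) = i ∧ f.coeff n ≠ 0

/-- If `f` and `g` both have property (*) for `p > 0` and
`f ≡ g (mod (tᵖ-1)²)`, then `f = g`. -/
theorem stmt8 (p : ℕ) (hp : 0 < p) (f g : ℤ[T;T⁻¹])
    (hf : PropertyStar p f) (hg : PropertyStar p g)
    (hdvd : (T (p : ℤ) - 1 : ℤ[T;T⁻¹]) ^ 2 ∣ f - g) :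
    f = g := by
  have hΨ : stmt8Ψ p f = stmt8Ψ p g := by
    obtain ⟨q, hq⟩ := hdvd
    have h0 : stmt8Ψ p (f - g) = 0 := by
      rw [hq, map_mul, stmt8Ψ_T_pow, zero_mul]
    rwa [map_sub, sub_eq_zero] at h0
  ext n
  obtain ⟨nf, hnf, hufr⟩ := hf (n : ZMod p)
  obtain ⟨ng, hng, hugr⟩ := hg (n : ZMod p)
  have hcoef : ((f.coeff nf : ℤ) : DualNumber ℤ) * (1 + (nf : DualNumber ℤ) * DualNumber.eps) =
      ((g.coeff ng : ℤ) : DualNumber ℤ) * (1 + (ng : DualNumber ℤ) * DualNumber.eps) := by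
    rw [← stmt8Ψ_apply_star p (n : ZMod p) hnf hufr,
      ← stmt8Ψ_apply_star p (n : ZMod p) hng hugr, hΨ]
  have hfst : f.coeff nf = g.coeff ng := by
    have h := congrArg TrivSqZeroExt.fst hcoef
    simpa [TrivSqZeroExt.fst_mul, DualNumber.fst_eps] using h
  have hsnd : (f.coeff nf) * nf = (g.coeff ng) * ng := by
    have h := congrArg TrivSqZeroExt.snd hcoef
    simpa [TrivSqZeroExt.snd_mul, DualNumber.snd_eps, DualNumber.fst_eps,
      TrivSqZeroExt.fst_mul, smul_eq_mul, mul_comm] using h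
  have hne : nf = ng := by
    rw [hfst] at hsnd
    exact mul_left_cancel₀ hng.2 hsnd
  by_cases hn : n = nf
  · rw [hn, hfst, hne]
  · have h1 : f.coeff n = 0 := by
      by_contra h
      exact hn (hufr n ⟨rfl, h⟩)
    have h2 : g.coeff n = 0 := by
      by_contra h
      exact hn ((hugr n ⟨rfl, h⟩).trans hne.symm)
    rw [h1, h2]
end
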